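/- If X and Y are compact metrizable spaces of positive dimension and there exists an embedding h : X × Y → X, then for every nontrivial continuum K such that Y contains topological copies of K of arbitrarily small diameter, the countable product K^ℕ embeds into X. -/

import Mathlib

open Set Function Topology

/-- A topological space is zero-dimensional (ind ≤ 0). -/
def ZeroDimSpace (X : Type*) [TopologicalSpace X] : Prop :=
  ∀ (x : X) (U : Set X), IsOpen U → x ∈ U → ∃ V : Set X, IsClopen V ∧ x ∈ V ∧ V ⊆ U

section Aux

variable {X Y K : Type*} [MetricSpace X] [CompactSpace X]
  [MetricSpace Y] [CompactSpace Y]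
  [MetricSpace K] [CompactSpace K] [Nonempty K]

/-- Uniform continuity extraction: for a jointly continuous family on compact spaces,
closeness of the first arguments implies uniform closeness of values. -/
lemma unif_aux {A Z : Type*} [MetricSpace A] [CompactSpace A]
    [TopologicalSpace Z] [CompactSpace Z]
    (Φ : A → Z → X) (hΦ : Continuous fun p : A × Z => Φ p.1 p.2)
    {ε : ℝ} (hε : 0 < ε) :
    ∃ δ > 0, ∀ a b : A, dist a b < δ → ∀ z : Z, dist (Φ a z) (Φ b z) < ε := by
  classical
  set S : Set ((A × A) × Z) := {p | ε ≤ dist (Φ p.1.1 p.2) (Φ p.1.2 p.2)} with hS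
  have hcont : Continuous fun p : (A × A) × Z => dist (Φ p.1.1 p.2) (Φ p.1.2 p.2) := by
    apply Continuous.dist
    · exact hΦ.comp ((continuous_fst.comp continuous_fst).prodMk continuous_snd)
    · exact hΦ.comp ((continuous_snd.comp continuous_fst).prodMk continuous_snd)
  have hSc : IsClosed S := isClosed_le continuous_const hcont
  have hScomp : IsCompact S := hSc.isCompact
  rcases S.eq_empty_or_nonempty with hSe | hSne
  · refine ⟨1, one_pos, fun a b hab z => ?_⟩
    by_contra hcon
    have : ((a, b), z) ∈ S := not_lt.mp hcon
    simp [hSe] at this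
  · obtain ⟨p₀, hp₀S, hp₀min⟩ := hScomp.exists_isMinOn hSne
      ((continuous_dist.comp ((continuous_fst.comp continuous_fst).prodMk
        (continuous_snd.comp continuous_fst)))).continuousOn
    have hδpos : 0 < dist p₀.1.1 p₀.1.2 := by
      rcases eq_or_lt_of_le (dist_nonneg (x := p₀.1.1) (y := p₀.1.2)) with heq | hlt
      · exfalso
        have heq' : p₀.1.1 = p₀.1.2 := dist_eq_zero.mp heq.symm
        have hεle : ε ≤ dist (Φ p₀.1.1 p₀.2) (Φ p₀.1.2 p₀.2) := hp₀S
        rw [heq', dist_self] at hεle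
        linarith
      · exact hlt
    refine ⟨dist p₀.1.1 p₀.1.2, hδpos, fun a b hab z => ?_⟩
    by_contra hcon
    have hmem : ((a, b), z) ∈ S := not_lt.mp hcon
    have hle : dist p₀.1.1 p₀.1.2 ≤ dist a b := hp₀min hmem
    exact absurd hab (not_lt.mpr hle)

/-- The stage property for the iterated embedding maps. -/
def StageProp (n : ℕ) (Φ : X → (ℕ → K) → X) : Prop :=
  Continuous (fun p : X × (ℕ → K) => Φ p.1 p.2) ∧
  ∀ x x' : X, ∀ k k' : ℕ → K, Φ x k = Φ x' k' → x = x' ∧ ∀ i < n, k i = k' i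

lemma step_lemma (h : X × Y → X) (hc : Continuous h) (hinj : Injective h) (ystar : Y)
    (small : ∀ η > (0:ℝ), ∃ e : K → Y, Continuous e ∧ Injective e ∧
      range e ⊆ Metric.ball ystar η)
    (n : ℕ) (Φ : X → (ℕ → K) → X) (hΦ : StageProp n Φ) :
    ∃ Φ' : X → (ℕ → K) → X, StageProp (K := K) (n+1) Φ' ∧
      (∀ x k, ∃ z, Φ' x k = Φ z k) ∧
      ∀ x k, dist (Φ' x k) (Φ (h (x, ystar)) k) ≤ (1/2 : ℝ)^n := by
  obtain ⟨δ, hδ, hδ'⟩ := unif_aux Φ hΦ.1 (ε := (1/2:ℝ)^n) (by positivity)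
  obtain ⟨η, hη, hη'⟩ := unif_aux (A := Y) (Z := X) (fun y x => h (x, y))
    (hc.comp (continuous_snd.prodMk continuous_fst)) hδ
  obtain ⟨e, he_cont, he_inj, he_range⟩ := small η hη
  refine ⟨fun x k => Φ (h (x, e (k n))) k, ⟨?_, ?_⟩, fun x k => ⟨h (x, e (k n)), rfl⟩,
    fun x k => ?_⟩
  · -- continuity
    show Continuous fun p : X × (ℕ → K) => Φ (h (p.1, e (p.2 n))) p.2
    exact hΦ.1.comp ((hc.comp (continuous_fst.prodMk
      (he_cont.comp ((continuous_apply n).comp continuous_snd)))).prodMk continuous_snd)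
  · -- injectivity
    intro x x' k k' heq
    obtain ⟨hxx, hkk⟩ := hΦ.2 _ _ _ _ heq
    have h2 := hinj hxx
    have hx' : x = x' := congrArg Prod.fst h2
    have hkn : k n = k' n := he_inj (congrArg Prod.snd h2)
    refine ⟨hx', fun i hi => ?_⟩
    rcases Nat.lt_succ_iff_lt_or_eq.mp hi with hi' | hi'
    · exact hkk i hi'
    · subst hi'; exact hkn
  · -- distance estimate
    have hb : dist (e (k n)) ystar < η := by
      have := he_range (mem_range_self (k n))
      simpa [Metric.mem_ball] using this
    have hd : dist (h (x, e (k n))) (h (x, ystar)) < δ := hη' _ _ hb x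
    exact le_of_lt (hδ' _ _ hd k)

/-- The recursively built sequence of stage maps. -/
noncomputable def built (h : X × Y → X) (hc : Continuous h) (hinj : Injective h) (ystar : Y)
    (small : ∀ η > (0:ℝ), ∃ e : K → Y, Continuous e ∧ Injective e ∧
      range e ⊆ Metric.ball ystar η) :
    ∀ n : ℕ, {Φ : X → (ℕ → K) → X // StageProp n Φ}
  | 0 => ⟨fun x _ => x,
      ⟨continuous_fst, fun x x' k k' hxk => ⟨hxk, fun i hi => absurd hi (Nat.not_lt_zero i)⟩⟩⟩
  | n+1 => ⟨(step_lemma h hc hinj ystar small n (built h hc hinj ystar small n).1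
        (built h hc hinj ystar small n).2).choose,
      (step_lemma h hc hinj ystar small n (built h hc hinj ystar small n).1
        (built h hc hinj ystar small n).2).choose_spec.1⟩

lemma built_link (h : X × Y → X) (hc : Continuous h) (hinj : Injective h) (ystar : Y)
    (small : ∀ η > (0:ℝ), ∃ e : K → Y, Continuous e ∧ Injective e ∧
      range e ⊆ Metric.ball ystar η) (n : ℕ) :
    (∀ x k, ∃ z, (built h hc hinj ystar small (n+1)).1 x k =
      (built h hc hinj ystar small n).1 z k) ∧
    ∀ x k, dist ((built h hc hinj ystar small (n+1)).1 x k)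
      ((built h hc hinj ystar small n).1 (h (x, ystar)) k) ≤ (1/2 : ℝ)^n := by
  have heq : (built h hc hinj ystar small (n+1)).1 =
      (step_lemma h hc hinj ystar small n (built h hc hinj ystar small n).1
        (built h hc hinj ystar small n).2).choose := by
    rw [built]
  rw [heq]
  exact (step_lemma h hc hinj ystar small n (built h hc hinj ystar small n).1
    (built h hc hinj ystar small n).2).choose_spec.2

/-- Main construction: given small copies clustering at `ystar` and a backward orbit,
`K^ℕ` maps into `X` continuously and injectively. -/
lemma main_embed (h : X × Y → X) (hc : Continuous h) (hinj : Injective h) (ystar : Y)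
    (small : ∀ η > (0:ℝ), ∃ e : K → Y, Continuous e ∧ Injective e ∧
      range e ⊆ Metric.ball ystar η)
    (x : ℕ → X) (hx : ∀ n, h (x (n+1), ystar) = x n) :
    ∃ e : (ℕ → K) → X, Continuous e ∧ Injective e := by
  classical
  set Φs : ℕ → X → (ℕ → K) → X := fun n => (built h hc hinj ystar small n).1 with hΦs
  have hstage : ∀ n, StageProp n (Φs n) := fun n => (built h hc hinj ystar small n).2
  have hlink := built_link h hc hinj ystar small
  set ψ : ℕ → (ℕ → K) → X := fun n k => Φs n (x n) k with hψ
  have hdist : ∀ n k, dist (ψ n k) (ψ (n+1) k) ≤ (1/2:ℝ)^n := by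
    intro n k
    rw [dist_comm]
    have hl := (hlink n).2 (x (n+1)) k
    rw [hx n] at hl
    exact hl
  have hcauchy : ∀ k, CauchySeq (fun n => ψ n k) := by
    intro k
    apply cauchySeq_of_le_geometric (1/2 : ℝ) 1 (by norm_num)
    intro n; simpa using hdist n k
  have hlim : ∀ k : ℕ → K, ∃ L, Filter.Tendsto (fun n => ψ n k) Filter.atTop (𝓝 L) :=
    fun k => cauchySeq_tendsto_of_complete (hcauchy k)
  choose ψI hψI using hlim
  have htail : ∀ n k, dist (ψ n k) (ψI k) ≤ 1 * (1/2:ℝ)^n / (1 - 1/2) := by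
    intro n k
    exact dist_le_of_le_geometric_of_tendsto (1/2) 1 (by norm_num)
      (fun m => by simpa using hdist m k) (hψI k) n
  have hcont_n : ∀ n, Continuous (fun k => ψ n k) := by
    intro n
    exact (hstage n).1.comp (continuous_const.prodMk continuous_id)
  have huc : TendstoUniformly (fun n k => ψ n k) ψI Filter.atTop := by
    rw [Metric.tendstoUniformly_iff]
    intro ε hε
    have h2 : Filter.Tendsto (fun n : ℕ => 1 * (1/2:ℝ)^n / (1 - 1/2)) Filter.atTop (𝓝 0) := by
      have h3 := tendsto_pow_atTop_nhds_zero_of_lt_one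
        (by norm_num : (0:ℝ) ≤ 1/2) (by norm_num : (1/2:ℝ) < 1)
      have h4 := h3.const_mul (2:ℝ)
      simp only [mul_zero] at h4
      convert h4 using 2 with n
      ring
    filter_upwards [h2.eventually (gt_mem_nhds hε)] with n hn k
    calc dist (ψI k) (ψ n k) = dist (ψ n k) (ψI k) := dist_comm _ _
      _ ≤ 1 * (1/2:ℝ)^n / (1 - 1/2) := htail n k
      _ < ε := hn
  have hcont : Continuous ψI := huc.continuous (Filter.Eventually.of_forall hcont_n).frequently
  have hCmem : ∀ m : ℕ, ∀ n, m + 1 ≤ n → ∀ a k, ∃ z u, u m = k m ∧ Φs n a k = Φs (m+1) z u := by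
    intro m n hn
    induction n with
    | zero => omega
    | succ n ih =>
      rcases Nat.lt_or_ge (m+1) (n+1) with hlt | hge
      · intro a k
        obtain ⟨z, hz⟩ := (hlink n).1 a k
        obtain ⟨z', u, hu, hzu⟩ := ih (by omega) z k
        exact ⟨z', u, hu, hz.trans hzu⟩
      · have hmn : n = m := by omega
        subst hmn
        exact fun a k => ⟨a, k, rfl, rfl⟩
  have hinj' : Injective ψI := by
    intro k k' hkk
    by_contra hne
    obtain ⟨m, hm⟩ : ∃ m, k m ≠ k' m := by
      by_contra hall
      push_neg at hall
      exact hne (funext hall)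
    set C : K → Set X := fun t =>
      (fun p : X × (ℕ → K) => Φs (m+1) p.1 p.2) '' (univ ×ˢ {u | u m = t}) with hC
    have hCcl : ∀ t, IsClosed (C t) := by
      intro t
      have hcomp : IsCompact ((univ : Set X) ×ˢ {u : ℕ → K | u m = t}) := by
        apply isCompact_univ.prod
        exact (IsClosed.preimage (continuous_apply m) isClosed_singleton).isCompact
      exact (hcomp.image (hstage (m+1)).1).isClosed
    have hmemC : ∀ t (k'' : ℕ → K), k'' m = t → ψI k'' ∈ C t := by
      intro t k'' ht
      have hmem : ∀ n, m + 1 ≤ n → ψ n k'' ∈ C t := by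
        intro n hn
        obtain ⟨z, u, hu, hz⟩ := hCmem m n hn (x n) k''
        exact ⟨(z, u), ⟨mem_univ z, by simp [hu, ht]⟩, hz.symm⟩
      have hev : ∀ᶠ n in Filter.atTop, ψ n k'' ∈ C t :=
        Filter.eventually_atTop.mpr ⟨m+1, hmem⟩
      exact (hCcl t).mem_of_tendsto (hψI k'') hev
    have h1 : ψI k ∈ C (k m) := hmemC (k m) k rfl
    have h2 : ψI k' ∈ C (k' m) := hmemC (k' m) k' rfl
    rw [hkk] at h1
    obtain ⟨⟨a, u⟩, ⟨-, hu⟩, hau⟩ := h1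
    obtain ⟨⟨a', u'⟩, ⟨-, hu'⟩, hau'⟩ := h2
    have heq : Φs (m+1) a u = Φs (m+1) a' u' := hau.trans hau'.symm
    obtain ⟨-, hcoord⟩ := (hstage (m+1)).2 _ _ _ _ heq
    have hfin := hcoord m (Nat.lt_succ_self m)
    simp only [mem_setOf_eq] at hu hu'
    rw [hu, hu'] at hfin
    exact hm hfin
  exact ⟨ψI, hcont, hinj'⟩

end Aux

/-- if `X`, `Y` are compacta of positive dimension, `h : X × Y → X`
is an embedding, and `K` is a nontrivial continuum admitting topological copies in
`Y` of arbitrarily small diameter, then `K^ℕ` embeds into `X`. -/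
theorem stmt_14 {X Y : Type*} [MetricSpace X] [CompactSpace X]
    [MetricSpace Y] [CompactSpace Y]
    (hX : ¬ ZeroDimSpace X) (hY : ¬ ZeroDimSpace Y)
    (h : X × Y → X) (hemb : IsEmbedding h)
    (K : Type*) [MetricSpace K] [CompactSpace K] [ConnectedSpace K] [Nontrivial K]
    (hcopies : ∀ ε : ℝ, 0 < ε → ∃ e : K → Y, IsEmbedding e ∧
      Metric.diam (Set.range e) < ε) :
    ∃ e : (ℕ → K) → X, IsEmbedding e := by
  classical
  have hXne : Nonempty X := by
    by_contra hne
    exact hX (fun x => absurd ⟨x⟩ hne)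
  have hKne : Nonempty K := inferInstance
  have hc : Continuous h := hemb.continuous
  have hinj : Injective h := hemb.injective
  -- Step 1: find ystar, a cluster point of small copies
  obtain ⟨ystar, small⟩ : ∃ ystar : Y, ∀ η > (0:ℝ), ∃ e : K → Y, Continuous e ∧
      Injective e ∧ Set.range e ⊆ Metric.ball ystar η := by
    choose g hg hgd using fun n : ℕ => hcopies (1/(n+1) : ℝ) (by positivity)
    set y : ℕ → Y := fun n => g n (Classical.arbitrary K) with hy
    obtain ⟨a, -, φ, hφ, hconv⟩ := isCompact_univ.tendsto_subseq (x := y) (fun n => mem_univ _)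
    refine ⟨a, fun η hη => ?_⟩
    have h1 : Filter.Tendsto (fun N : ℕ => (1 : ℝ)/(φ N + 1)) Filter.atTop (𝓝 0) := by
      apply tendsto_one_div_add_atTop_nhds_zero_nat.comp
      exact hφ.tendsto_atTop
    obtain ⟨N1, hN1⟩ := (Metric.tendsto_atTop.mp hconv) (η/2) (by positivity)
    obtain ⟨N2, hN2⟩ := Filter.eventually_atTop.mp (h1.eventually (gt_mem_nhds
      (show (0:ℝ) < η/2 by positivity)))
    set N := max N1 N2
    refine ⟨g (φ N), (hg (φ N)).continuous, (hg (φ N)).injective, fun w hw => ?_⟩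
    rw [Metric.mem_ball]
    have hdw : dist w (y (φ N)) ≤ Metric.diam (Set.range (g (φ N))) := by
      apply Metric.dist_le_diam_of_mem
      · exact (isCompact_range (hg (φ N)).continuous).isBounded
      · exact hw
      · exact mem_range_self _
    have hdiam : Metric.diam (Set.range (g (φ N))) < 1/(φ N + 1) := hgd (φ N)
    have hsmall : (1:ℝ)/(φ N + 1) < η/2 := hN2 N (le_max_right _ _)
    have hya : dist (y (φ N)) a < η/2 := hN1 N (le_max_left _ _)
    calc dist w a ≤ dist w (y (φ N)) + dist (y (φ N)) a := dist_triangle _ _ _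
      _ < η/2 + η/2 := add_lt_add (lt_trans (lt_of_le_of_lt hdw hdiam) hsmall) hya
      _ = η := by ring
  -- Step 2: backward orbit of f = h(·, ystar)
  obtain ⟨x, hx⟩ : ∃ x : ℕ → X, ∀ n, h (x (n+1), ystar) = x n := by
    set f : X → X := fun z => h (z, ystar) with hf
    have hfc : Continuous f := hc.comp (continuous_id.prodMk continuous_const)
    set S : ℕ → Set X := fun m => f^[m] '' univ with hSdef
    have hScomp : ∀ m, IsCompact (S m) := fun m =>
      isCompact_univ.image (hfc.iterate m)
    have hSsub : ∀ m, S (m+1) ⊆ S m := by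
      intro m w hw
      obtain ⟨v, -, hv⟩ := hw
      rw [Function.iterate_succ, Function.comp_apply] at hv
      exact ⟨f v, mem_univ _, hv⟩
    have hSne : ∀ m, (S m).Nonempty := fun m =>
      ⟨f^[m] (Classical.arbitrary X), Classical.arbitrary X, mem_univ _, rfl⟩
    set A : Set X := ⋂ m, S m with hA
    have hAne : A.Nonempty := IsCompact.nonempty_iInter_of_sequence_nonempty_isCompact_isClosed
      S hSsub hSne (hScomp 0) (fun m => (hScomp m).isClosed)
    have hAback : ∀ a ∈ A, ∃ b ∈ A, f b = a := by
      intro a ha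
      set B : ℕ → Set X := fun m => S m ∩ f ⁻¹' {a} with hB
      have hBne : ∀ m, (B m).Nonempty := by
        intro m
        have haS : a ∈ S (m+1) := mem_iInter.mp ha (m+1)
        obtain ⟨v, -, hv⟩ := haS
        rw [Function.iterate_succ', Function.comp_apply] at hv
        exact ⟨f^[m] v, ⟨v, mem_univ _, rfl⟩, by simp [hv]⟩
      have hBsub : ∀ m, B (m+1) ⊆ B m := fun m =>
        inter_subset_inter_left _ (hSsub m)
      have hBcomp : ∀ m, IsCompact (B m) := fun m =>
        (hScomp m).inter_right (IsClosed.preimage hfc isClosed_singleton)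
      have hBint : (⋂ m, B m).Nonempty :=
        IsCompact.nonempty_iInter_of_sequence_nonempty_isCompact_isClosed
          B hBsub hBne (hBcomp 0) (fun m => (hBcomp m).isClosed)
      obtain ⟨b, hb⟩ := hBint
      refine ⟨b, mem_iInter.mpr (fun m => (mem_iInter.mp hb m).1), ?_⟩
      have hb0 := (mem_iInter.mp hb 0).2
      simpa using hb0
    obtain ⟨a₀, ha₀⟩ := hAne
    have hch : ∀ p : A, ∃ q : A, f q = p := by
      rintro ⟨p, hp⟩
      obtain ⟨b, hb, hfb⟩ := hAback p hp
      exact ⟨⟨b, hb⟩, hfb⟩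
    choose G hG using hch
    refine ⟨fun n => (G^[n] ⟨a₀, ha₀⟩ : A), fun n => ?_⟩
    show h (((G^[n+1] ⟨a₀, ha₀⟩ : A) : X), ystar) = ((G^[n] ⟨a₀, ha₀⟩ : A) : X)
    rw [Function.iterate_succ', Function.comp_apply]
    exact hG (G^[n] ⟨a₀, ha₀⟩)
  obtain ⟨e, he_cont, he_inj⟩ := main_embed h hc hinj ystar small x hx
  exact ⟨e, (he_cont.isClosedEmbedding he_inj).toIsEmbedding⟩
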